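/- Let N ≥ 2 be an integer and let V* = (V*_1, …, V*_N) ∈ ℝ^N satisfy P(V*_i) = P(V*_j) for all 1 ≤ i, j ≤ N and (1/N) Σ_{j=1}^N V*_j = V̄ > 0. Then V*_j > 0 for all 1 ≤ j ≤ N. -/
import Mathlib


/-- Droplet volume as a function of height: v(h) = h(h²+3)/4. -/
noncomputable def vol (h : ℝ) : ℝ := h * (h ^ 2 + 3) / 4

/-- Droplet pressure as a function of height: p(h) = 4h/(h²+1). -/
noncomputable def pres (h : ℝ) : ℝ := 4 * h / (h ^ 2 + 1)

/-- Pressure as a function of volume: P(V) = p(h) where v(h) = V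
(v is a strictly increasing bijection of ℝ, so its inverse is well defined). -/
noncomputable def Pfun (V : ℝ) : ℝ := pres (Function.invFun vol V)

/-- Δ_s(x) = |x|^s sgn(x). -/
noncomputable def Ds (s x : ℝ) : ℝ := |x| ^ s * Real.sign x

lemma vol_strictMono : StrictMono vol := by
  intro a b hab
  unfold vol
  nlinarith [sq_nonneg (a + b), sq_nonneg a, sq_nonneg b]

lemma vol_surj : Function.Surjective vol := by
  intro V
  have hc : Continuous vol := by unfold vol; continuity
  set a := min (-1 : ℝ) V with ha
  set b := max (1 : ℝ) V with hb
  have ha1 : a ≤ -1 := min_le_left _ _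
  have haV : a ≤ V := min_le_right _ _
  have hb1 : (1 : ℝ) ≤ b := le_max_left _ _
  have hbV : V ≤ b := le_max_right _ _
  have h1 : vol a ≤ V := by unfold vol; nlinarith [sq_nonneg a]
  have h2 : V ≤ vol b := by unfold vol; nlinarith [sq_nonneg b]
  have hab : a ≤ b := by linarith
  have := intermediate_value_Icc hab hc.continuousOn
  have hV : V ∈ Set.Icc (vol a) (vol b) := ⟨h1, h2⟩
  obtain ⟨h, _, hh⟩ := this hV
  exact ⟨h, hh⟩

lemma Pfun_pos_iff (V : ℝ) : 0 < Pfun V ↔ 0 < V := by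
  set h := Function.invFun vol V with hh
  have hvh : vol h = V := Function.invFun_eq (vol_surj V)
  have hv0 : vol 0 = 0 := by unfold vol; ring
  have hiff : 0 < h ↔ 0 < V := by
    constructor
    · intro hx
      rw [← hvh, ← hv0]
      exact vol_strictMono hx
    · intro hx
      have hlt : vol 0 < vol h := by rw [hv0, hvh]; exact hx
      exact vol_strictMono.lt_iff_lt.mp hlt
  unfold Pfun pres
  rw [← hh]
  constructor
  · intro hp
    have hden : (0:ℝ) < h ^ 2 + 1 := by positivity
    have : 0 < 4 * h := by
      by_contra hle
      push_neg at hle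
      have : 4 * h / (h ^ 2 + 1) ≤ 0 := div_nonpos_of_nonpos_of_nonneg hle hden.le
      linarith
    exact hiff.mp (by linarith)
  · intro hV
    have h0 : 0 < h := hiff.mpr hV
    have hden : (0:ℝ) < h ^ 2 + 1 := by positivity
    positivity

theorem stmt10 (N : ℕ) (hN : 2 ≤ N) (Vstar : Fin N → ℝ) (Vbar : ℝ) (hVbar : 0 < Vbar)
    (heq : ∀ i j, Pfun (Vstar i) = Pfun (Vstar j))
    (hmean : (1 / (N : ℝ)) * ∑ j, Vstar j = Vbar) :
    ∀ j, 0 < Vstar j := by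
  intro j
  by_contra hle
  push_neg at hle
  have hPj : ¬ 0 < Pfun (Vstar j) := fun hp => absurd ((Pfun_pos_iff _).mp hp) (not_lt.mpr hle)
  have hall : ∀ i, Vstar i ≤ 0 := by
    intro i
    by_contra hi
    push_neg at hi
    have := (Pfun_pos_iff (Vstar i)).mpr hi
    rw [heq i j] at this
    exact hPj this
  have hsum : ∑ i, Vstar i ≤ 0 := Finset.sum_nonpos fun i _ => hall i
  have hNpos : (0:ℝ) < N := by positivity
  have : (1 / (N : ℝ)) * ∑ i, Vstar i ≤ 0 := by
    apply mul_nonpos_of_nonneg_of_nonpos (by positivity) hsum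
  linarith
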